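/- For every measurable function g : [0,∞) → [0,∞) one has ∫₀^∞ e^{−ρt} (∫_t^∞ e^{−(ρ+κ)(s−t)} g(s) ds)² dt ≤ (1/((ρ+κ)κ)) · ∫₀^∞ e^{−ρs} g(s)² ds. -/

import Mathlib

open MeasureTheory Set Function
open scoped ENNReal

lemma aux_base (c : ℝ) (hc : 0 < c) :
    ∫⁻ u in Set.Ioi (0:ℝ), ENNReal.ofReal (Real.exp (-(c * u))) = ENNReal.ofReal (1 / c) := by
  rw [← ofReal_integral_eq_lintegral_ofReal]
  · congr 1
    have h := integral_comp_mul_left_Ioi (fun x => Real.exp (-x)) 0 hc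
    simp only [mul_zero, smul_eq_mul] at h
    rw [h, integral_exp_neg_Ioi_zero, mul_one, one_div]
  · exact (by simpa [neg_mul] using exp_neg_integrableOn_Ioi 0 hc : IntegrableOn (fun u => Real.exp (-(c * u))) (Ioi 0) volume)
  · filter_upwards with x using (Real.exp_pos _).le


lemma aux_shiftA (c t : ℝ) (hc : 0 < c) :
    ∫⁻ s in Set.Ioi t, ENNReal.ofReal (Real.exp (-(c * (s - t)))) = ENNReal.ofReal (1 / c) := by
  have hmp := measurePreserving_add_right (volume : Measure ℝ) t
  have hemb : MeasurableEmbedding (fun x : ℝ => x + t) :=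
    (MeasurableEquiv.addRight t).measurableEmbedding
  have h := hmp.setLIntegral_comp_preimage_emb hemb
    (fun s => ENNReal.ofReal (Real.exp (-(c * (s - t))))) (Set.Ioi t)
  rw [← h]
  have hpre : (fun x : ℝ => x + t) ⁻¹' Set.Ioi t = Set.Ioi 0 := by
    ext u; simp
  rw [hpre, ← aux_base c hc]
  refine setLIntegral_congr_fun measurableSet_Ioi ?_
  intro u _
  simp

lemma aux_shiftB (c s : ℝ) (hc : 0 < c) :
    ∫⁻ t in Set.Iio s, ENNReal.ofReal (Real.exp (-(c * (s - t)))) = ENNReal.ofReal (1 / c) := by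
  have hmp := Measure.measurePreserving_sub_left (volume : Measure ℝ) s
  have hemb : MeasurableEmbedding (fun x : ℝ => s - x) :=
    (MeasurableEquiv.subLeft s).measurableEmbedding
  have h := hmp.setLIntegral_comp_preimage_emb hemb
    (fun t => ENNReal.ofReal (Real.exp (-(c * (s - t))))) (Set.Iio s)
  rw [← h]
  have hpre : (fun x : ℝ => s - x) ⁻¹' Set.Iio s = Set.Ioi 0 := by
    ext u; simp
  rw [hpre, ← aux_base c hc]
  refine setLIntegral_congr_fun measurableSet_Ioi ?_
  intro u _
  simp

lemma aux_cs (c t : ℝ) (hc : 0 < c) (g : ℝ → ℝ) (hg : Measurable g) :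
    (∫⁻ s in Set.Ioi t, ENNReal.ofReal (Real.exp (-(c * (s - t)))) * ENNReal.ofReal (g s)) ^ 2
      ≤ ENNReal.ofReal (1 / c) *
        ∫⁻ s in Set.Ioi t, ENNReal.ofReal (Real.exp (-(c * (s - t)))) * ENNReal.ofReal (g s) ^ 2 := by
  set h : ℝ → ℝ≥0∞ := fun s => ENNReal.ofReal (Real.exp (-(c * (s - t)) / 2)) with hh_def
  set G : ℝ → ℝ≥0∞ := fun s => ENNReal.ofReal (g s) with hG_def
  have key : ∀ s, ENNReal.ofReal (Real.exp (-(c * (s - t)))) = h s * h s := by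
    intro s
    rw [hh_def, ← ENNReal.ofReal_mul (Real.exp_pos _).le, ← Real.exp_add]
    norm_num
  have hhm : Measurable h := by
    apply Measurable.ennreal_ofReal
    exact (((measurable_id.sub_const t).const_mul c).neg.div_const 2).exp
  have hGm : Measurable G := hg.ennreal_ofReal
  have hpq : (2:ℝ).HolderConjugate 2 := Real.HolderConjugate.two_two
  have hCS := ENNReal.lintegral_mul_le_Lp_mul_Lq (volume.restrict (Set.Ioi t)) hpq
    hhm.aemeasurable (hhm.mul hGm).aemeasurable
  have sqr : ∀ x : ℝ≥0∞, (x ^ ((1:ℝ)/2)) ^ (2:ℕ) = x := by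
    intro x
    rw [← ENNReal.rpow_natCast (x ^ ((1:ℝ)/2)) 2, ← ENNReal.rpow_mul]
    norm_num
  have hrw2 : ∀ x : ℝ≥0∞, x ^ (2:ℝ) = x * x := by
    intro x
    rw [show (2:ℝ) = ((2:ℕ):ℝ) by norm_num, ENNReal.rpow_natCast, sq]
  have e1 : (∫⁻ s in Set.Ioi t, h s ^ (2:ℝ)) = ENNReal.ofReal (1 / c) := by
    rw [← aux_shiftA c t hc]
    refine lintegral_congr fun s => ?_
    rw [hrw2, ← key]
  have e2 : (∫⁻ s in Set.Ioi t, (h s * G s) ^ (2:ℝ))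
      = ∫⁻ s in Set.Ioi t, ENNReal.ofReal (Real.exp (-(c * (s - t)))) * ENNReal.ofReal (g s) ^ 2 := by
    refine lintegral_congr fun s => ?_
    rw [hrw2, key]
    ring
  have e0 : (∫⁻ s in Set.Ioi t, ENNReal.ofReal (Real.exp (-(c * (s - t)))) * ENNReal.ofReal (g s))
      = ∫⁻ s in Set.Ioi t, (h * (h * G)) s := by
    refine lintegral_congr fun s => ?_
    simp only [Pi.mul_apply]
    rw [key]; ring
  rw [e0]
  calc (∫⁻ s in Set.Ioi t, (h * (h * G)) s) ^ 2
      ≤ ((∫⁻ s in Set.Ioi t, h s ^ (2:ℝ)) ^ ((1:ℝ)/2)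
        * (∫⁻ s in Set.Ioi t, (h s * G s) ^ (2:ℝ)) ^ ((1:ℝ)/2)) ^ 2 := by
        refine pow_le_pow_left₀ (zero_le) ?_ 2
        simpa using hCS
    _ = (∫⁻ s in Set.Ioi t, h s ^ (2:ℝ)) * (∫⁻ s in Set.Ioi t, (h s * G s) ^ (2:ℝ)) := by
        rw [mul_pow, sqr, sqr]
    _ = _ := by rw [e1, e2]

lemma aux_tonelli (ρ κ : ℝ) (hρ : 0 < ρ) (hκ : 0 < κ) (g : ℝ → ℝ) (hg : Measurable g) :
    (∫⁻ t in Set.Ioi (0:ℝ), ∫⁻ s in Set.Ioi t,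
        ENNReal.ofReal (Real.exp (-(ρ * t))) *
          (ENNReal.ofReal (Real.exp (-((ρ + κ) * (s - t)))) * ENNReal.ofReal (g s) ^ 2))
      ≤ ENNReal.ofReal (1 / κ) *
        ∫⁻ s in Set.Ioi (0:ℝ), ENNReal.ofReal (Real.exp (-(ρ * s))) * ENNReal.ofReal (g s) ^ 2 := by
  set K : ℝ → ℝ → ℝ≥0∞ := fun t s =>
    ENNReal.ofReal (Real.exp (-(ρ * t))) *
      (ENNReal.ofReal (Real.exp (-((ρ + κ) * (s - t)))) * ENNReal.ofReal (g s) ^ 2) with hK_def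
  have hK : ∀ t s, K t s = (ENNReal.ofReal (Real.exp (-(ρ * s))) * ENNReal.ofReal (g s) ^ 2)
      * ENNReal.ofReal (Real.exp (-(κ * (s - t)))) := by
    intro t s
    have hexp : Real.exp (-(ρ * t)) * Real.exp (-((ρ + κ) * (s - t)))
        = Real.exp (-(ρ * s)) * Real.exp (-(κ * (s - t))) := by
      rw [← Real.exp_add, ← Real.exp_add]; ring_nf
    rw [hK_def]
    calc ENNReal.ofReal (Real.exp (-(ρ * t))) *
          (ENNReal.ofReal (Real.exp (-((ρ + κ) * (s - t)))) * ENNReal.ofReal (g s) ^ 2)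
        = ENNReal.ofReal (Real.exp (-(ρ * t)) * Real.exp (-((ρ + κ) * (s - t))))
            * ENNReal.ofReal (g s) ^ 2 := by
          rw [ENNReal.ofReal_mul (Real.exp_pos _).le]; ring
      _ = ENNReal.ofReal (Real.exp (-(ρ * s)) * Real.exp (-(κ * (s - t))))
            * ENNReal.ofReal (g s) ^ 2 := by rw [hexp]
      _ = _ := by rw [ENNReal.ofReal_mul (Real.exp_pos _).le]; ring
  set S : Set (ℝ × ℝ) := {p : ℝ × ℝ | 0 < p.1 ∧ p.1 < p.2} with hS_def
  have hSm : MeasurableSet S :=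
    (measurableSet_lt measurable_const measurable_fst).inter
      (measurableSet_lt measurable_fst measurable_snd)
  set f : ℝ → ℝ → ℝ≥0∞ := fun t s => S.indicator (fun p => K p.1 p.2) (t, s) with hf_def
  have hKm : Measurable fun p : ℝ × ℝ => K p.1 p.2 := by
    show Measurable ((fun p : ℝ × ℝ => ENNReal.ofReal (Real.exp (-(ρ * p.1)))) * fun p : ℝ × ℝ => ENNReal.ofReal (Real.exp (-((ρ + κ) * (p.2 - p.1)))) * ENNReal.ofReal (g p.2) ^ 2)
    apply Measurable.mul
    · exact (Real.measurable_exp.comp (measurable_fst.const_mul ρ).neg).ennreal_ofReal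
    · exact ((Real.measurable_exp.comp
        (((measurable_snd.sub measurable_fst).const_mul (ρ + κ)).neg)).ennreal_ofReal).mul
        (((hg.comp measurable_snd).ennreal_ofReal).pow_const 2)
  have hfm : AEMeasurable (uncurry f) ((volume : Measure ℝ).prod volume) := by
    have : uncurry f = S.indicator (fun p => K p.1 p.2) := rfl
    rw [this]
    exact (hKm.indicator hSm).aemeasurable
  have stepA : (∫⁻ t in Set.Ioi (0:ℝ), ∫⁻ s in Set.Ioi t, K t s) = ∫⁻ t, ∫⁻ s, f t s := by
    rw [← lintegral_indicator measurableSet_Ioi]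
    refine lintegral_congr fun t => ?_
    by_cases ht : 0 < t
    · rw [Set.indicator_of_mem (Set.mem_Ioi.2 ht), ← lintegral_indicator measurableSet_Ioi]
      refine lintegral_congr fun s => ?_
      by_cases hs : t < s
      · simp only [hf_def]
        rw [Set.indicator_of_mem (Set.mem_Ioi.2 hs),
          Set.indicator_of_mem (show (t, s) ∈ S from ⟨ht, hs⟩)]
      · simp only [hf_def]
        rw [Set.indicator_of_notMem (by simpa using hs),
          Set.indicator_of_notMem (show (t, s) ∉ S from fun hmem => hs hmem.2)]
    · rw [Set.indicator_of_notMem (by simpa using ht)]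
      symm
      have : ∀ s, f t s = 0 := fun s =>
        Set.indicator_of_notMem (by simp [hS_def, ht]) _
      simp [this]
  have stepB : ∀ s, (∫⁻ t, f t s) = ∫⁻ t in Set.Ioo 0 s, K t s := by
    intro s
    rw [← lintegral_indicator measurableSet_Ioo]
    refine lintegral_congr fun t => ?_
    simp only [hf_def]
    by_cases h : 0 < t ∧ t < s
    · rw [Set.indicator_of_mem (show (t, s) ∈ S from h), Set.indicator_of_mem (Set.mem_Ioo.2 h)]
    · rw [Set.indicator_of_notMem (show (t, s) ∉ S from h),
        Set.indicator_of_notMem (fun hmem => h (Set.mem_Ioo.1 hmem))]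
  have stepC : (∫⁻ s, ∫⁻ t in Set.Ioo 0 s, K t s)
      = ∫⁻ s in Set.Ioi (0:ℝ), ∫⁻ t in Set.Ioo 0 s, K t s := by
    rw [← lintegral_indicator measurableSet_Ioi]
    refine lintegral_congr fun s => ?_
    by_cases hs : 0 < s
    · rw [Set.indicator_of_mem (Set.mem_Ioi.2 hs)]
    · rw [Set.indicator_of_notMem (by simpa using hs), Set.Ioo_eq_empty hs]
      simp
  have bound : ∀ s : ℝ, (∫⁻ t in Set.Ioo 0 s, K t s)
      ≤ (ENNReal.ofReal (Real.exp (-(ρ * s))) * ENNReal.ofReal (g s) ^ 2)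
          * ENNReal.ofReal (1 / κ) := by
    intro s
    calc (∫⁻ t in Set.Ioo 0 s, K t s) ≤ ∫⁻ t in Set.Iio s, K t s :=
          lintegral_mono_set Set.Ioo_subset_Iio_self
      _ = ∫⁻ t in Set.Iio s, (ENNReal.ofReal (Real.exp (-(ρ * s))) * ENNReal.ofReal (g s) ^ 2)
            * ENNReal.ofReal (Real.exp (-(κ * (s - t)))) := lintegral_congr fun t => hK t s
      _ = (ENNReal.ofReal (Real.exp (-(ρ * s))) * ENNReal.ofReal (g s) ^ 2)
            * ∫⁻ t in Set.Iio s, ENNReal.ofReal (Real.exp (-(κ * (s - t)))) := by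
          rw [lintegral_const_mul' _ _ (ENNReal.mul_ne_top ENNReal.ofReal_ne_top (ENNReal.pow_ne_top ENNReal.ofReal_ne_top))]
      _ = _ := by rw [aux_shiftB κ s hκ]
  calc (∫⁻ t in Set.Ioi (0:ℝ), ∫⁻ s in Set.Ioi t, K t s)
      = ∫⁻ s, ∫⁻ t, f t s := by rw [stepA, lintegral_lintegral_swap hfm]
    _ = ∫⁻ s in Set.Ioi (0:ℝ), ∫⁻ t in Set.Ioo 0 s, K t s := by
        simp_rw [stepB]; exact stepC
    _ ≤ ∫⁻ s in Set.Ioi (0:ℝ), (ENNReal.ofReal (Real.exp (-(ρ * s))) * ENNReal.ofReal (g s) ^ 2)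
          * ENNReal.ofReal (1 / κ) := lintegral_mono fun s => bound s
    _ = _ := by
        rw [lintegral_mul_const' _ _ ENNReal.ofReal_ne_top, mul_comm]

/-- for `ρ, κ > 0` and any measurable `g : [0,∞) → [0,∞)`,
`∫₀^∞ e^{−ρt} (∫_t^∞ e^{−(ρ+κ)(s−t)} g(s) ds)² dt
  ≤ (1/((ρ+κ)κ)) · ∫₀^∞ e^{−ρs} g(s)² ds`. -/
theorem stmt_4 (ρ κ : ℝ) (hρ : 0 < ρ) (hκ : 0 < κ)
    (g : ℝ → ℝ) (hg_meas : Measurable g) (hg_nonneg : ∀ s, 0 ≤ g s) :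
    (∫⁻ t in Set.Ioi (0 : ℝ), ENNReal.ofReal (Real.exp (-ρ * t)) *
        (∫⁻ s in Set.Ioi t,
          ENNReal.ofReal (Real.exp (-(ρ + κ) * (s - t))) * ENNReal.ofReal (g s)) ^ 2)
      ≤ ENNReal.ofReal (1 / ((ρ + κ) * κ)) *
        ∫⁻ s in Set.Ioi (0 : ℝ),
          ENNReal.ofReal (Real.exp (-ρ * s)) * ENNReal.ofReal (g s) ^ 2 := by
  have ha : 0 < ρ + κ := by linarith
  simp only [neg_mul]
  calc (∫⁻ t in Set.Ioi (0 : ℝ), ENNReal.ofReal (Real.exp (-(ρ * t))) *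
        (∫⁻ s in Set.Ioi t,
          ENNReal.ofReal (Real.exp (-((ρ + κ) * (s - t)))) * ENNReal.ofReal (g s)) ^ 2)
      ≤ ∫⁻ t in Set.Ioi (0 : ℝ), ENNReal.ofReal (Real.exp (-(ρ * t))) *
          (ENNReal.ofReal (1 / (ρ + κ)) *
            ∫⁻ s in Set.Ioi t, ENNReal.ofReal (Real.exp (-((ρ + κ) * (s - t))))
              * ENNReal.ofReal (g s) ^ 2) :=
        lintegral_mono fun t => mul_le_mul_right (aux_cs (ρ + κ) t ha g hg_meas) _
    _ = ENNReal.ofReal (1 / (ρ + κ)) * ∫⁻ t in Set.Ioi (0 : ℝ), ∫⁻ s in Set.Ioi t,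
          ENNReal.ofReal (Real.exp (-(ρ * t))) *
            (ENNReal.ofReal (Real.exp (-((ρ + κ) * (s - t)))) * ENNReal.ofReal (g s) ^ 2) := by
        rw [← lintegral_const_mul' _ _ ENNReal.ofReal_ne_top]
        refine lintegral_congr fun t => ?_
        rw [lintegral_const_mul' _ _ ENNReal.ofReal_ne_top, mul_left_comm,
          ← lintegral_const_mul' _ _ ENNReal.ofReal_ne_top]
    _ ≤ ENNReal.ofReal (1 / (ρ + κ)) * (ENNReal.ofReal (1 / κ) *
          ∫⁻ s in Set.Ioi (0 : ℝ),
            ENNReal.ofReal (Real.exp (-(ρ * s))) * ENNReal.ofReal (g s) ^ 2) :=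
        mul_le_mul_right (aux_tonelli ρ κ hρ hκ g hg_meas) _
    _ = ENNReal.ofReal (1 / ((ρ + κ) * κ)) *
          ∫⁻ s in Set.Ioi (0 : ℝ),
            ENNReal.ofReal (Real.exp (-(ρ * s))) * ENNReal.ofReal (g s) ^ 2 := by
        rw [← mul_assoc, ← ENNReal.ofReal_mul (by positivity), div_mul_div_comm, one_mul]
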